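/- Typical states from equidistributed ensembles have near-maximal complexity: Let 𝒢 be a gate set in U(d), fix a unit vector ψ₀ ∈ S(d), and let ν_S be a probability measure on S(d) such that ν_S(B_S(φ,s)) ≤ (β·s)^{2(d−1)} for every φ ∈ S(d) and every s ≥ ε (upper equidistribution at scale ε with parameter β ≥ 1). Let Δ ∈ (0,1) and let r be a natural number such that |𝒢|^{r+1}·(β·ε)^{2d−2} ≤ Δ. Then ν_S({ψ ∈ S(d) : ∃ W ∈ 𝒢^{≤r} with d_S(ψ, W·ψ₀) ≤ ε}) ≤ Δ; i.e., with ν_S-probability at least 1−Δ the ε-state-complexity of ψ exceeds r. -/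

import Mathlib

open MeasureTheory
open scoped ENNReal Matrix InnerProductSpace

namespace Paper

noncomputable section

instance matMS (d : ℕ) : MeasurableSpace (Matrix (Fin d) (Fin d) ℂ) := borel _
instance matBS (d : ℕ) : BorelSpace (Matrix (Fin d) (Fin d) ℂ) := ⟨rfl⟩

/-- The unitary group `U(d)`. -/
abbrev UG (d : ℕ) := Matrix.unitaryGroup (Fin d) ℂ

/-- ℓ²→ℓ² operator norm (spectral norm) of a matrix. -/
def opNorm {d : ℕ} (A : Matrix (Fin d) (Fin d) ℂ) : ℝ :=
  ‖Matrix.toEuclideanCLM (𝕜 := ℂ) A‖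

/-- Phase-invariant distance on unitary channels. -/
def D {d : ℕ} (U V : UG d) : ℝ :=
  ⨅ z : {z : ℂ // ‖z‖ = 1},
    opNorm ((U : Matrix (Fin d) (Fin d) ℂ) - z.val • (V : Matrix (Fin d) (Fin d) ℂ))

/-- Closed ball of radius `r` around `V` in `U(d)` for the distance `D`. -/
def ball {d : ℕ} (V : UG d) (r : ℝ) : Set (UG d) := {U | D U V ≤ r}

/-- Haar volume of a ball of radius `r`. -/
def Vol {d : ℕ} (μ : Measure (UG d)) (r : ℝ) : ℝ≥0∞ := μ (ball 1 r)

/-- `(α,β)`-equidistribution of `ν` at scale `ε` (relative to the Haar measure `μ`). -/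
def Equidistributed {d : ℕ} (μ ν : Measure (UG d)) (α β ε : ℝ) : Prop :=
  ∀ (V : UG d) (r : ℝ), ε ≤ r →
    Vol μ (α * r) ≤ ν (ball V r) ∧ ν (ball V r) ≤ Vol μ (β * r)

/-- Products of at most `r` elements of the gate set `𝒢`. -/
def wordsLe {d : ℕ} (𝒢 : Finset (UG d)) (r : ℕ) : Set (UG d) :=
  {W | ∃ l : List (UG d), l.length ≤ r ∧ (∀ g ∈ l, g ∈ 𝒢) ∧ l.prod = W}

/-- Convolution of two measures on a monoid: pushforward of the product measure under
multiplication. -/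
def mconv {G : Type*} [Monoid G] [MeasurableSpace G] (ν ϑ : Measure G) : Measure G :=
  (ν.prod ϑ).map (fun p => p.1 * p.2)

/-- `t`-fold convolution power of a measure. -/
def convPow {G : Type*} [Monoid G] [MeasurableSpace G] (ν : Measure G) : ℕ → Measure G
  | 0 => Measure.dirac 1
  | n + 1 => mconv (convPow ν n) ν

/-- The random walk `U_t = V_t ⋯ V_1`. -/
def walk {d : ℕ} {Ω : Type*} (V : ℕ → Ω → UG d) (t : ℕ) (ω : Ω) : UG d :=
  ((List.range t).map (fun i => V (t - i) ω)).prod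

/-- Euclidean space `ℂ^d`. -/
abbrev EV (d : ℕ) := EuclideanSpace ℂ (Fin d)

instance evMS (d : ℕ) : MeasurableSpace (EV d) := borel _
instance evBS (d : ℕ) : BorelSpace (EV d) := ⟨rfl⟩

/-- Distance on pure states. -/
def dS {d : ℕ} (ψ φ : EV d) : ℝ := Real.sqrt (1 - ‖⟪ψ, φ⟫_ℂ‖ ^ 2)

/-- Ball of radius `r` around the state `φ`, inside the set of unit vectors. -/
def ballS {d : ℕ} (φ : EV d) (r : ℝ) : Set (EV d) := {ψ | ‖ψ‖ = 1 ∧ dS ψ φ ≤ r}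

/-- Action of a unitary matrix on a vector. -/
def act {d : ℕ} (U : UG d) (ψ : EV d) : EV d :=
  Matrix.toEuclideanLin (U : Matrix (Fin d) (Fin d) ℂ) ψ

/-- Topological support of a measure. -/
def msupport {X : Type*} [TopologicalSpace X] [MeasurableSpace X] (ν : Measure X) : Set X :=
  {x | ∀ U : Set X, IsOpen U → x ∈ U → ν U ≠ 0}

/-- Packing number (as an extended nonnegative real): supremum of cardinalities of finite
subsets of `Y` whose elements are pairwise at `dist`-distance at least `ε`. -/
def Npack {X : Type*} (dist : X → X → ℝ) (Y : Set X) (ε : ℝ) : ℝ≥0∞ :=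
  ⨆ (S : Finset X) (_ : ↑S ⊆ Y ∧ (S : Set X).Pairwise fun x y => ε ≤ dist x y),
    (S.card : ℝ≥0∞)

end
end Paper

namespace Paper
open ProbabilityTheory


private lemma geom_le_pow {c : ℕ} (hc : 2 ≤ c) (n : ℕ) :
    ∑ i ∈ Finset.range n, c ^ i ≤ c ^ n :=
  (Nat.geomSum_lt hc (fun k hk => Finset.mem_range.mp hk)).le

private lemma act_norm {d : ℕ} (W : UG d) (ψ : EV d) : ‖act W ψ‖ = ‖ψ‖ := by
  have hmem : Matrix.toEuclideanCLM (𝕜 := ℂ) (W : Matrix (Fin d) (Fin d) ℂ)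
      ∈ unitary (EuclideanSpace ℂ (Fin d) →L[ℂ] EuclideanSpace ℂ (Fin d)) := by
    constructor
    · rw [← map_star, ← map_mul]
      rw [(Matrix.mem_unitaryGroup_iff'.mp W.2 : star (W : Matrix (Fin d) (Fin d) ℂ) * W = 1)]
      exact map_one _
    · rw [← map_star, ← map_mul]
      rw [(Matrix.mem_unitaryGroup_iff.mp W.2 : (W : Matrix (Fin d) (Fin d) ℂ) * star W = 1)]
      exact map_one _
  have h := ContinuousLinearMap.norm_map_of_mem_unitary hmem ψ
  have hact : act W ψ = Matrix.toEuclideanCLM (𝕜 := ℂ) (W : Matrix (Fin d) (Fin d) ℂ) ψ := by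
    rw [show (Matrix.toEuclideanCLM (𝕜 := ℂ) (W : Matrix (Fin d) (Fin d) ℂ) ψ)
        = (Matrix.toEuclideanCLM (𝕜 := ℂ) (W : Matrix (Fin d) (Fin d) ℂ)
            : EV d →ₗ[ℂ] EV d) ψ from rfl,
      Matrix.coe_toEuclideanCLM_eq_toEuclideanLin]
    rfl
  rw [hact, h]

theorem stmt13 {d : ℕ} (hd : 2 ≤ d) (𝒢 : Finset (UG d)) (h𝒢 : 2 ≤ 𝒢.card)
    (ψ₀ : EV d) (hψ₀ : ‖ψ₀‖ = 1)
    (νS : Measure (EV d)) [IsProbabilityMeasure νS]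
    {β ε Δ : ℝ} (hβ : 1 ≤ β) (hε : 0 < ε)
    (hup : ∀ φ : EV d, ‖φ‖ = 1 → ∀ s : ℝ, ε ≤ s →
      νS (ballS φ s) ≤ ENNReal.ofReal ((β * s) ^ (2 * (d - 1))))
    (hΔ0 : 0 < Δ) (hΔ1 : Δ < 1) (r : ℕ)
    (hr : (𝒢.card : ℝ) ^ (r + 1) * (β * ε) ^ (2 * (d - 1)) ≤ Δ) :
    νS {ψ : EV d | ‖ψ‖ = 1 ∧ ∃ W ∈ wordsLe 𝒢 r, dS ψ (act W ψ₀) ≤ ε}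
      ≤ ENNReal.ofReal Δ := by
  classical
  set m := 2 * (d - 1) with hm
  set x := (β * ε) ^ m with hx
  have hx0 : 0 ≤ x := by positivity
  -- index type for words
  let T := (k : Fin (r + 1)) × (Fin (k : ℕ) → {g // g ∈ 𝒢})
  let f : T → UG d := fun t => (List.ofFn fun i => ((t.2 i : UG d))).prod
  -- coverage
  have hcov : {ψ : EV d | ‖ψ‖ = 1 ∧ ∃ W ∈ wordsLe 𝒢 r, dS ψ (act W ψ₀) ≤ ε}
      ⊆ ⋃ t : T, ballS (act (f t) ψ₀) ε := by
    rintro ψ ⟨hψ, W, ⟨l, hlen, hmem, hprod⟩, hdist⟩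
    refine Set.mem_iUnion.mpr ?_
    refine ⟨⟨⟨l.length, by omega⟩, fun i => ⟨l.get i, hmem _ (List.get_mem l i)⟩⟩, hψ, ?_⟩
    have : f ⟨⟨l.length, by omega⟩, fun i => ⟨l.get i, hmem _ (List.get_mem l i)⟩⟩ = W := by
      simp only [f, List.ofFn_get, hprod]
    rw [this]; exact hdist
  have hball : ∀ t : T, νS (ballS (act (f t) ψ₀) ε) ≤ ENNReal.ofReal x := by
    intro t
    have := hup (act (f t) ψ₀) (by rw [act_norm, hψ₀]) ε le_rfl
    simpa [hx, hm] using this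
  calc νS {ψ : EV d | ‖ψ‖ = 1 ∧ ∃ W ∈ wordsLe 𝒢 r, dS ψ (act W ψ₀) ≤ ε}
      ≤ νS (⋃ t : T, ballS (act (f t) ψ₀) ε) := measure_mono hcov
    _ ≤ ∑' t : T, νS (ballS (act (f t) ψ₀) ε) := measure_iUnion_le _
    _ = ∑ t : T, νS (ballS (act (f t) ψ₀) ε) := tsum_fintype _
    _ ≤ ∑ _t : T, ENNReal.ofReal x := Finset.sum_le_sum fun t _ => hball t
    _ = (Fintype.card T : ℝ≥0∞) * ENNReal.ofReal x := by
        rw [Finset.sum_const, nsmul_eq_mul, Finset.card_univ]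
    _ ≤ ((𝒢.card ^ (r + 1) : ℕ) : ℝ≥0∞) * ENNReal.ofReal x := by
        have hcard : Fintype.card T ≤ 𝒢.card ^ (r + 1) := by
          have h1 : Fintype.card T = ∑ k : Fin (r + 1), 𝒢.card ^ (k : ℕ) := by
            rw [Fintype.card_sigma]
            congr 1; ext k
            rw [Fintype.card_fun, Fintype.card_coe, Fintype.card_fin]
          rw [h1, Fin.sum_univ_eq_sum_range (fun k => 𝒢.card ^ k)]
          exact geom_le_pow h𝒢 (r + 1)
        exact mul_le_mul_left (by exact_mod_cast hcard) _
    _ = ENNReal.ofReal ((𝒢.card : ℝ) ^ (r + 1) * x) := by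
        rw [← ENNReal.ofReal_natCast, ← ENNReal.ofReal_mul (by positivity)]
        congr 1
        push_cast
        ring
    _ ≤ ENNReal.ofReal Δ := ENNReal.ofReal_le_ofReal (hx ▸ hr)


end Paper
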